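/- Let X ∼ P on a finite set 𝒳 and let guesses be i.i.d. from a full-support distribution P̂, with G the first index k such that X̂ₖ = X. Then for ρ ≥ 1, the expectation of V_ρ = C(G + ρ - 1, ρ) equals ∑_{x ∈ 𝒳} P(x) / P̂(x)^ρ, where C denotes the generalized binomial coefficient. -/

import Mathlib

open MeasureTheory ProbabilityTheory

open Set
open scoped ENNReal

lemma hasSum_exp_real (x : ℝ) : HasSum (fun n : ℕ => x ^ n / (n.factorial : ℝ)) (Real.exp x) := by
  rw [Real.exp_eq_exp_ℝ]
  exact NormedSpace.expSeries_div_hasSum_exp x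

lemma lemA {ρ q : ℝ} (hρ : 0 < ρ) (hq0 : 0 < q) (hq1 : q ≤ 1) :
    ∑' n : ℕ, ENNReal.ofReal
      (Real.Gamma ((n : ℝ) + ρ + 1) / (Real.Gamma (ρ + 1) * Real.Gamma ((n : ℝ) + 1)) *
        ((1 - q) ^ n * q)) = ENNReal.ofReal (q ^ (-ρ)) := by
  have hΓρ : 0 < Real.Gamma (ρ + 1) := Real.Gamma_pos_of_pos (by linarith)
  have h1q : 0 ≤ 1 - q := by linarith
  set C : ℝ := q / Real.Gamma (ρ + 1) with hC
  have hCpos : 0 < C := div_pos hq0 hΓρ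
  set g : ℕ → ℝ → ℝ :=
    fun n u => Real.exp (-u) * u ^ ((n : ℝ) + ρ) * ((1 - q) ^ n / (n.factorial : ℝ) * C) with hg
  have hintn : ∀ n : ℕ, IntegrableOn (fun u : ℝ => Real.exp (-u) * u ^ ((n : ℝ) + ρ)) (Ioi 0) := by
    intro n
    have h := Real.GammaIntegral_convergent (s := (n : ℝ) + ρ + 1) (by positivity)
    simpa using h
  have hgint : ∀ n : ℕ, Integrable (g n) (volume.restrict (Ioi 0)) := fun n =>
    (hintn n).mul_const _
  have hval : ∀ n : ℕ, ∫ u in Ioi 0, g n u =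
      Real.Gamma ((n : ℝ) + ρ + 1) / (Real.Gamma (ρ + 1) * Real.Gamma ((n : ℝ) + 1)) *
        ((1 - q) ^ n * q) := by
    intro n
    rw [hg]
    simp only []
    rw [MeasureTheory.integral_mul_const]
    have hΓ : Real.Gamma ((n : ℝ) + ρ + 1) = ∫ u in Ioi 0, Real.exp (-u) * u ^ ((n : ℝ) + ρ) := by
      rw [Real.Gamma_eq_integral (by positivity)]
      norm_num
    rw [← hΓ, hC]
    rw [Real.Gamma_nat_eq_factorial]
    have hn : (0:ℝ) < (n.factorial : ℝ) := by positivity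
    field_simp
  have hnonneg : ∀ n : ℕ, 0 ≤ᵐ[volume.restrict (Ioi 0)] g n := by
    intro n
    filter_upwards [ae_restrict_mem measurableSet_Ioi] with u hu
    have hu' : (0:ℝ) < u := hu
    have h1 : 0 ≤ u ^ ((n:ℝ) + ρ) := Real.rpow_nonneg hu'.le _
    exact mul_nonneg (mul_nonneg (Real.exp_pos _).le h1)
      (mul_nonneg (div_nonneg (pow_nonneg h1q n) (Nat.cast_nonneg _)) hCpos.le)
  have key : ∀ n : ℕ,
      ENNReal.ofReal (Real.Gamma ((n : ℝ) + ρ + 1) /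
          (Real.Gamma (ρ + 1) * Real.Gamma ((n : ℝ) + 1)) * ((1 - q) ^ n * q))
        = ∫⁻ u in Ioi 0, ENNReal.ofReal (g n u) := by
    intro n
    rw [← hval n]
    exact MeasureTheory.ofReal_integral_eq_lintegral_ofReal (hgint n) (hnonneg n)
  have hmeasae : ∀ n : ℕ, AEMeasurable (fun u => ENNReal.ofReal (g n u))
      (volume.restrict (Ioi 0)) :=
    fun n => ENNReal.measurable_ofReal.comp_aemeasurable (hgint n).aemeasurable
  have hint2 : IntegrableOn (fun u : ℝ => C * (u ^ ρ * Real.exp (-(q * u)))) (Ioi 0) := by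
    have h := integrableOn_rpow_mul_exp_neg_mul_rpow (s := ρ) (p := 1) (b := q)
      (by linarith) zero_lt_one hq0
    have h' : IntegrableOn (fun u : ℝ => u ^ ρ * Real.exp (-(q * u))) (Ioi 0) := by
      refine h.congr_fun (fun u hu => ?_) measurableSet_Ioi
      simp only [Real.rpow_one]
      ring_nf
    exact h'.const_mul C
  have hnn2 : 0 ≤ᵐ[volume.restrict (Ioi 0)] fun u : ℝ => C * (u ^ ρ * Real.exp (-(q * u))) := by
    filter_upwards [ae_restrict_mem measurableSet_Ioi] with u hu
    have hu' : (0:ℝ) < u := hu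
    have h1 : 0 ≤ u ^ ρ := Real.rpow_nonneg hu'.le _
    positivity
  rw [tsum_congr key, ← lintegral_tsum hmeasae]
  have hstep : ∫⁻ u in Ioi 0, ∑' n : ℕ, ENNReal.ofReal (g n u)
      = ∫⁻ u in Ioi 0, ENNReal.ofReal (C * (u ^ ρ * Real.exp (-(q * u)))) := by
    refine setLIntegral_congr_fun_ae measurableSet_Ioi (ae_of_all _ fun u hu => ?_)
    have hu' : (0:ℝ) < u := hu
    have hfun : ∀ n : ℕ,
        C * (u ^ ρ * Real.exp (-u)) * (((1 - q) * u) ^ n / (n.factorial : ℝ)) = g n u := by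
      intro n
      rw [hg]
      simp only []
      rw [Real.rpow_add hu', Real.rpow_natCast, mul_pow]
      ring
    have he : C * (u ^ ρ * Real.exp (-u)) * Real.exp ((1 - q) * u)
        = C * (u ^ ρ * Real.exp (-(q * u))) := by
      have h2 : Real.exp (-u) * Real.exp ((1 - q) * u) = Real.exp (-(q * u)) := by
        rw [← Real.exp_add]
        congr 1
        ring
      calc C * (u ^ ρ * Real.exp (-u)) * Real.exp ((1 - q) * u)
          = C * (u ^ ρ * (Real.exp (-u) * Real.exp ((1 - q) * u))) := by ring
        _ = C * (u ^ ρ * Real.exp (-(q * u))) := by rw [h2]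
    have hsumu : HasSum (fun n : ℕ => g n u) (C * (u ^ ρ * Real.exp (-(q * u)))) := by
      have h := (hasSum_exp_real ((1 - q) * u)).mul_left (C * (u ^ ρ * Real.exp (-u)))
      rw [show (fun n : ℕ => C * (u ^ ρ * Real.exp (-u)) *
          (((1 - q) * u) ^ n / (n.factorial : ℝ))) = fun n => g n u from funext hfun,
        he] at h
      exact h
    have hgn : ∀ n : ℕ, 0 ≤ g n u := by
      intro n
      rw [← hfun n]
      have h1 : 0 ≤ u ^ ρ := Real.rpow_nonneg hu'.le _
      have h3 : (0:ℝ) ≤ (1 - q) * u := mul_nonneg h1q hu'.le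
      positivity
    rw [← ENNReal.ofReal_tsum_of_nonneg hgn hsumu.summable, hsumu.tsum_eq]
  rw [hstep, ← MeasureTheory.ofReal_integral_eq_lintegral_ofReal hint2 hnn2]
  congr 1
  rw [MeasureTheory.integral_const_mul]
  have hg2 : ∫ u in Ioi 0, u ^ ρ * Real.exp (-(q * u))
      = (1 / q) ^ (ρ + 1) * Real.Gamma (ρ + 1) := by
    have h := Real.integral_rpow_mul_exp_neg_mul_Ioi (a := ρ + 1) (by linarith) hq0
    rw [show ρ + 1 - 1 = ρ by ring] at h
    exact h
  rw [hg2, hC]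
  have h1 : (1 / q) ^ (ρ + 1) = q ^ (-(ρ + 1)) := by
    rw [one_div, Real.inv_rpow hq0.le, ← Real.rpow_neg hq0.le]
  have h2 : q * q ^ (-(ρ + 1)) = q ^ (-ρ) := by
    nth_rewrite 1 [← Real.rpow_one q]
    rw [← Real.rpow_add hq0]
    norm_num
  rw [h1]
  field_simp
  rw [← h2]

open ProbabilityTheory

/-- Generalized binomial coefficient via the Gamma function. -/
noncomputable def genBinom (x y : ℝ) : ℝ :=
  Real.Gamma (x + 1) / (Real.Gamma (y + 1) * Real.Gamma (x - y + 1))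

/-- Let `X ~ P` on a finite set `𝒳` and let guesses be i.i.d. from a full-support
distribution `Q = P̂`, independent of `X`, with `G` the first index `k ≥ 1` such that
`X̂ₖ = X`.  Then for `ρ ≥ 1`, `E[ C(G+ρ-1, ρ) ] = ∑_{x ∈ 𝒳} P(x) / P̂(x)^ρ`. -/
theorem stmt_3 {𝒳 : Type*} [Fintype 𝒳] [m𝒳 : MeasurableSpace 𝒳] [MeasurableSingletonClass 𝒳]
    {Ω : Type*} [MeasurableSpace Ω] (μ : Measure Ω) [IsProbabilityMeasure μ]
    (P Q : 𝒳 → ℝ) (hP0 : ∀ x, 0 ≤ P x) (hP1 : ∑ x, P x = 1)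
    (hQ0 : ∀ x, 0 < Q x) (hQ1 : ∑ x, Q x = 1)
    (X : Ω → 𝒳) (Xhat : ℕ → Ω → 𝒳)
    (hXm : Measurable X) (hXhatm : ∀ j, Measurable (Xhat j))
    (hindep : iIndepFun (fun (o : Option ℕ) => o.elim X Xhat) μ)
    (hlawX : ∀ x, μ {ω | X ω = x} = ENNReal.ofReal (P x))
    (hlawXhat : ∀ j x, μ {ω | Xhat j ω = x} = ENNReal.ofReal (Q x))
    (G : Ω → ℕ) (hG : ∀ ω, G ω = sInf {j | Xhat j ω = X ω} + 1)
    (ρ : ℝ) (hρ : 1 ≤ ρ) :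
    ∫ ω, genBinom ((G ω : ℝ) + ρ - 1) ρ ∂μ = ∑ x, P x / Q x ^ ρ := by
  classical
  have hρ0 : (0:ℝ) < ρ := by linarith
  have hΓρ : 0 < Real.Gamma (ρ + 1) := Real.Gamma_pos_of_pos (by linarith)
  have hQ1' : ∀ x, Q x ≤ 1 := by
    intro x
    calc Q x ≤ ∑ y, Q y := Finset.single_le_sum (fun y _ => (hQ0 y).le) (Finset.mem_univ x)
      _ = 1 := hQ1
  set c : ℕ → ℝ := fun n =>
    Real.Gamma ((n:ℝ) + ρ + 1) / (Real.Gamma (ρ + 1) * Real.Gamma ((n:ℝ) + 1)) with hc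
  have hcpos : ∀ n, 0 < c n := by
    intro n
    have h1 : 0 < Real.Gamma ((n:ℝ) + ρ + 1) := Real.Gamma_pos_of_pos (by positivity)
    have h2 : 0 < Real.Gamma ((n:ℝ) + 1) := Real.Gamma_pos_of_pos (by positivity)
    exact div_pos h1 (mul_pos hΓρ h2)
  set A : 𝒳 × ℕ → Set Ω := fun p =>
    {ω | X ω = p.1 ∧ (∀ j < p.2, Xhat j ω ≠ p.1) ∧ Xhat p.2 ω = p.1} with hA
  have hA_eq : ∀ p : 𝒳 × ℕ, A p =
      ({ω | X ω = p.1} ∩ ⋂ (j : ℕ) (_ : j < p.2), {ω | Xhat j ω = p.1}ᶜ) ∩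
        {ω | Xhat p.2 ω = p.1} := by
    intro p
    ext ω
    simp [hA, and_assoc]
  have hA_meas : ∀ p, MeasurableSet (A p) := by
    intro p
    rw [hA_eq]
    refine MeasurableSet.inter (MeasurableSet.inter ?_ ?_) ?_
    · exact hXm (measurableSet_singleton p.1)
    · exact MeasurableSet.iInter fun j => MeasurableSet.iInter fun _ =>
        ((hXhatm j) (measurableSet_singleton p.1)).compl
    · exact (hXhatm p.2) (measurableSet_singleton p.1)
  have hA_measure : ∀ x n, μ (A (x, n)) =
      ENNReal.ofReal (P x) * (ENNReal.ofReal (1 - Q x) ^ n * ENNReal.ofReal (Q x)) := by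
    intro x n
    set sets : Option ℕ → Set 𝒳 :=
      fun o => o.elim {x} (fun j => if j < n then {x}ᶜ else {x}) with hsets
    set S : Finset (Option ℕ) := insert none ((Finset.range (n+1)).image some) with hS
    have hmeas : ∀ i, i ∈ S → MeasurableSet (sets i) := by
      rintro (_|j) _
      · exact measurableSet_singleton x
      · simp only [hsets, Option.elim]
        split
        · exact (measurableSet_singleton x).compl
        · exact measurableSet_singleton x
    have hkey := hindep.measure_inter_preimage_eq_mul S hmeas
    have hset_eq : (⋂ i ∈ S, (fun o => o.elim X Xhat) i ⁻¹' sets i) = A (x, n) := by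
      ext ω
      simp only [Set.mem_iInter, hS, Finset.mem_insert, Finset.mem_image, Finset.mem_range,
        hA, Set.mem_setOf_eq, hsets]
      constructor
      · intro h
        have hnone := h none (Or.inl rfl)
        simp only [Option.elim, Set.mem_preimage, Set.mem_singleton_iff] at hnone
        refine ⟨hnone, fun j hj => ?_, ?_⟩
        · have := h (some j) (Or.inr ⟨j, by omega, rfl⟩)
          simp only [Option.elim, Set.mem_preimage, if_pos hj, Set.mem_compl_iff,
            Set.mem_singleton_iff] at this
          exact this
        · have := h (some n) (Or.inr ⟨n, by omega, rfl⟩)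
          simp only [Option.elim, Set.mem_preimage, lt_irrefl, if_neg (lt_irrefl n),
            Set.mem_singleton_iff] at this
          exact this
      · rintro ⟨h1, h2, h3⟩ i hi
        rcases hi with rfl | ⟨j, hj, rfl⟩
        · simpa using h1
        · simp only [Option.elim, Set.mem_preimage]
          by_cases hjn : j < n
          · rw [if_pos hjn]
            exact h2 j hjn
          · have : j = n := by omega
            subst this
            rw [if_neg hjn]
            simpa using h3
    have hnone_notmem : none ∉ (Finset.range (n+1)).image some := by simp
    have hprod : ∏ i ∈ S, μ ((fun o => o.elim X Xhat) i ⁻¹' sets i) =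
        ENNReal.ofReal (P x) * (ENNReal.ofReal (1 - Q x) ^ n * ENNReal.ofReal (Q x)) := by
      rw [hS, Finset.prod_insert hnone_notmem, Finset.prod_image (by simp)]
      have h1 : μ ((fun o => o.elim X Xhat) none ⁻¹' sets none) = ENNReal.ofReal (P x) := by
        exact hlawX x
      rw [h1]
      congr 1
      rw [Finset.prod_range_succ]
      have h2 : ∀ j ∈ Finset.range n,
          μ ((fun o => o.elim X Xhat) (some j) ⁻¹' sets (some j))
            = ENNReal.ofReal (1 - Q x) := by
        intro j hj
        simp only [Finset.mem_range] at hj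
        simp only [hsets, Option.elim, if_pos hj]
        have hpre : Xhat j ⁻¹' {x}ᶜ = {ω | Xhat j ω = x}ᶜ := rfl
        have hms : MeasurableSet {ω | Xhat j ω = x} := (hXhatm j) (measurableSet_singleton x)
        rw [hpre, measure_compl hms (measure_ne_top μ _), hlawXhat j x, measure_univ]
        rw [ENNReal.ofReal_sub _ (hQ0 x).le]
        simp
      rw [Finset.prod_congr rfl h2, Finset.prod_const, Finset.card_range]
      congr 1
      simp only [hsets, Option.elim, if_neg (lt_irrefl n)]
      exact hlawXhat n x
    rw [← hset_eq, hkey, hprod]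
  have hA_disj : Pairwise (Function.onFun Disjoint A) := by
    rintro ⟨x, n⟩ ⟨y, m⟩ hne
    rw [Function.onFun, Set.disjoint_left]
    rintro ω ⟨hX1, hlt1, heq1⟩ ⟨hX2, hlt2, heq2⟩
    obtain rfl : x = y := hX1.symm.trans hX2
    have hnm : n ≠ m := fun h => hne (by rw [h])
    rcases Nat.lt_or_ge n m with h | h
    · exact hlt2 n h heq1
    · exact hlt1 m (by omega) heq2
  have hGA : ∀ x n, ∀ ω ∈ A (x, n), G ω = n + 1 := by
    intro x n ω hω
    obtain ⟨hX1, hlt1, heq1⟩ := hω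
    rw [hG ω]
    congr 1
    have hmem : n ∈ {j | Xhat j ω = X ω} := by
      simp only [Set.mem_setOf_eq, hX1]
      exact heq1
    refine le_antisymm (Nat.sInf_le hmem) ?_
    by_contra hcon
    push_neg at hcon
    have hin := Nat.sInf_mem (⟨n, hmem⟩ : {j | Xhat j ω = X ω}.Nonempty)
    exact hlt1 _ hcon (by rw [← hX1]; exact hin)
  have hr_lt : ∀ x, ENNReal.ofReal (1 - Q x) < 1 := by
    intro x
    rw [← ENNReal.ofReal_one]
    exact (ENNReal.ofReal_lt_ofReal_iff_of_nonneg (by linarith [hQ1' x])).mpr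
      (by linarith [hQ0 x])
  have hgeo : ∀ x, ∑' n : ℕ, ENNReal.ofReal (1 - Q x) ^ n * ENNReal.ofReal (Q x) = 1 := by
    intro x
    rw [ENNReal.tsum_mul_right, ENNReal.tsum_geometric]
    have h1 : (1 : ℝ≥0∞) - ENNReal.ofReal (1 - Q x) = ENNReal.ofReal (Q x) := by
      rw [← ENNReal.ofReal_one, ← ENNReal.ofReal_sub _ (by linarith [hQ1' x])]
      norm_num
    rw [h1]
    exact ENNReal.inv_mul_cancel (by simp [hQ0 x]) ENNReal.ofReal_ne_top
  have htot : ∑' p : 𝒳 × ℕ, μ (A p) = 1 := by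
    have hsplit : ∑' p : 𝒳 × ℕ, μ (A p) = ∑' x : 𝒳, ∑' n : ℕ, μ (A (x, n)) :=
      ENNReal.tsum_prod (f := fun x n => μ (A (x, n)))
    rw [hsplit]
    have h1 : ∀ x : 𝒳, ∑' n : ℕ, μ (A (x, n)) = ENNReal.ofReal (P x) := by
      intro x
      have : ∀ n : ℕ, μ (A (x, n)) =
          ENNReal.ofReal (P x) * (ENNReal.ofReal (1 - Q x) ^ n * ENNReal.ofReal (Q x)) :=
        hA_measure x
      rw [tsum_congr this, ENNReal.tsum_mul_left, hgeo x, mul_one]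
    rw [tsum_congr h1, tsum_fintype]
    rw [← ENNReal.ofReal_sum_of_nonneg (fun x _ => hP0 x), hP1, ENNReal.ofReal_one]
  have hUnull : μ (⋃ p, A p)ᶜ = 0 := by
    have hU : μ (⋃ p, A p) = 1 := by
      rw [measure_iUnion hA_disj hA_meas, htot]
    rw [measure_compl (MeasurableSet.iUnion hA_meas) (measure_ne_top μ _), measure_univ, hU,
      tsub_self]
  have hmatch_meas : ∀ j, MeasurableSet {ω | Xhat j ω = X ω} := by
    intro j
    have h : {ω | Xhat j ω = X ω} = ⋃ x : 𝒳, ({ω | Xhat j ω = x} ∩ {ω | X ω = x}) := by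
      ext ω
      simp only [Set.mem_setOf_eq, Set.mem_iUnion, Set.mem_inter_iff]
      constructor
      · intro h; exact ⟨X ω, h, rfl⟩
      · rintro ⟨x, h1, h2⟩; rw [h1, h2]
    rw [h]
    exact MeasurableSet.iUnion fun x =>
      ((hXhatm j) (measurableSet_singleton x)).inter (hXm (measurableSet_singleton x))
  have hGm : Measurable G := by
    apply measurable_to_countable'
    intro k
    match k with
    | 0 =>
      have h : G ⁻¹' {0} = ∅ := by
        ext ω; simp [hG ω]
      rw [h]; exact MeasurableSet.empty
    | (n+1) =>
      have hpre : G ⁻¹' {n+1} =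
          (({ω | Xhat n ω = X ω} ∩ ⋂ (j : ℕ) (_ : j < n), {ω | Xhat j ω = X ω}ᶜ)
            ∪ (if n = 0 then ⋂ j : ℕ, {ω | Xhat j ω = X ω}ᶜ else ∅)) := by
        ext ω
        simp only [Set.mem_preimage, Set.mem_singleton_iff, hG ω, add_left_inj,
          Set.mem_union, Set.mem_inter_iff, Set.mem_iInter, Set.mem_compl_iff,
          Set.mem_setOf_eq]
        by_cases hS : {j | Xhat j ω = X ω}.Nonempty
        · constructor
          · intro h
            left
            constructor
            · have hm := Nat.sInf_mem hS
              rw [h] at hm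
              exact hm
            · intro j hj
              exact Nat.notMem_of_lt_sInf (by rw [h]; exact hj)
          · intro h
            rcases h with ⟨h1, h2⟩ | h
            · refine le_antisymm (Nat.sInf_le h1) ?_
              by_contra hcon
              push_neg at hcon
              exact h2 _ hcon (Nat.sInf_mem hS)
            · by_cases hn : n = 0
              · rw [if_pos hn] at h
                obtain ⟨j, hj⟩ := hS
                exact absurd hj (Set.mem_iInter.1 h j)
              · rw [if_neg hn] at h
                exact absurd h (Set.notMem_empty ω)
        · have hSe : {j | Xhat j ω = X ω} = ∅ := Set.not_nonempty_iff_eq_empty.1 hS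
          rw [hSe, Nat.sInf_empty]
          constructor
          · intro h
            right
            rw [if_pos h.symm]
            refine Set.mem_iInter.2 fun j => ?_
            exact fun hc => hS ⟨j, hc⟩
          · intro h
            rcases h with ⟨h1, _⟩ | h
            · exact absurd h1 (fun hc => hS ⟨n, hc⟩)
            · by_cases hn : n = 0
              · exact hn.symm
              · rw [if_neg hn] at h
                exact absurd h (Set.notMem_empty ω)
      rw [hpre]
      refine MeasurableSet.union
        ((hmatch_meas n).inter (MeasurableSet.iInter fun j => MeasurableSet.iInter fun _ =>
          (hmatch_meas j).compl)) ?_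
      split
      · exact MeasurableSet.iInter fun j => (hmatch_meas j).compl
      · exact MeasurableSet.empty
  have hfval : ∀ ω, genBinom ((G ω : ℝ) + ρ - 1) ρ =
      Real.Gamma ((G ω : ℝ) + ρ) / (Real.Gamma (ρ + 1) * Real.Gamma (G ω)) := by
    intro ω
    simp only [genBinom]
    rw [show (G ω : ℝ) + ρ - 1 + 1 = (G ω : ℝ) + ρ by ring,
      show (G ω : ℝ) + ρ - 1 - ρ + 1 = (G ω : ℝ) by ring]
  have hG1 : ∀ ω, 1 ≤ G ω := fun ω => by rw [hG ω]; omega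
  have hfnn : ∀ ω, 0 ≤ genBinom ((G ω : ℝ) + ρ - 1) ρ := by
    intro ω
    rw [hfval ω]
    have hg1 : (0:ℝ) < (G ω : ℝ) := by
      have := hG1 ω
      exact_mod_cast Nat.lt_of_lt_of_le Nat.zero_lt_one this
    have h1 : 0 < Real.Gamma ((G ω : ℝ) + ρ) := Real.Gamma_pos_of_pos (by linarith)
    have h2 : 0 < Real.Gamma ((G ω : ℝ)) := Real.Gamma_pos_of_pos hg1
    positivity
  have hfm : Measurable fun ω => genBinom ((G ω : ℝ) + ρ - 1) ρ := by
    have h : (fun ω => genBinom ((G ω : ℝ) + ρ - 1) ρ)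
        = (fun k : ℕ => genBinom ((k : ℝ) + ρ - 1) ρ) ∘ G := rfl
    rw [h]
    exact measurable_from_top.comp hGm
  have hfA : ∀ p : 𝒳 × ℕ, ∀ ω ∈ A p, genBinom ((G ω : ℝ) + ρ - 1) ρ = c p.2 := by
    rintro ⟨x, n⟩ ω hω
    rw [hfval ω, hGA x n ω hω, hc]
    push_cast
    rw [show (n : ℝ) + 1 + ρ = (n : ℝ) + ρ + 1 by ring]
  rw [MeasureTheory.integral_eq_lintegral_of_nonneg_ae (ae_of_all _ hfnn)
    hfm.aestronglyMeasurable]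
  have hres : μ.restrict (⋃ p, A p) = μ := by
    rw [Measure.restrict_congr_set (ae_eq_univ.2 hUnull), Measure.restrict_univ]
  have hlin : ∫⁻ ω, ENNReal.ofReal (genBinom ((G ω : ℝ) + ρ - 1) ρ) ∂μ
      = ENNReal.ofReal (∑ x, P x / Q x ^ ρ) := by
    conv_lhs => rw [← hres]
    rw [lintegral_iUnion hA_meas hA_disj]
    have hper : ∀ p : 𝒳 × ℕ, ∫⁻ ω in A p, ENNReal.ofReal (genBinom ((G ω : ℝ) + ρ - 1) ρ) ∂μ
        = ENNReal.ofReal (c p.2) * μ (A p) := by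
      intro p
      rw [setLIntegral_congr_fun_ae (hA_meas p)
        (ae_of_all _ fun ω hω => by rw [hfA p ω hω] :
          ∀ᵐ ω ∂μ, ω ∈ A p → ENNReal.ofReal (genBinom ((G ω : ℝ) + ρ - 1) ρ)
            = ENNReal.ofReal (c p.2))]
      exact setLIntegral_const _ _
    rw [tsum_congr hper]
    have hsplit : ∑' p : 𝒳 × ℕ, ENNReal.ofReal (c p.2) * μ (A p)
        = ∑' x : 𝒳, ∑' n : ℕ, ENNReal.ofReal (c n) * μ (A (x, n)) :=
      ENNReal.tsum_prod (f := fun x n => ENNReal.ofReal (c n) * μ (A (x, n)))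
    rw [hsplit]
    have hx : ∀ x : 𝒳, ∑' n : ℕ, ENNReal.ofReal (c n) * μ (A (x, n))
        = ENNReal.ofReal (P x) * ENNReal.ofReal (Q x ^ (-ρ)) := by
      intro x
      have h1q : (0:ℝ) ≤ 1 - Q x := by linarith [hQ1' x]
      have hterm : ∀ n : ℕ, ENNReal.ofReal (c n) * μ (A (x, n))
          = ENNReal.ofReal (P x) * ENNReal.ofReal (c n * ((1 - Q x) ^ n * Q x)) := by
        intro n
        rw [hA_measure x n, mul_left_comm]
        congr 1
        rw [ENNReal.ofReal_mul (hcpos n).le, ENNReal.ofReal_mul (pow_nonneg h1q n),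
          ENNReal.ofReal_pow h1q]
      rw [tsum_congr hterm, ENNReal.tsum_mul_left, lemA hρ0 (hQ0 x) (hQ1' x)]
    rw [tsum_congr hx, tsum_fintype]
    have hfin : ∀ x ∈ Finset.univ, ENNReal.ofReal (P x) * ENNReal.ofReal (Q x ^ (-ρ))
        = ENNReal.ofReal (P x / Q x ^ ρ) := by
      intro x _
      rw [← ENNReal.ofReal_mul (hP0 x)]
      congr 1
      rw [Real.rpow_neg (hQ0 x).le, div_eq_mul_inv]
    rw [Finset.sum_congr rfl hfin,
      ← ENNReal.ofReal_sum_of_nonneg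
        (fun x _ => div_nonneg (hP0 x) (Real.rpow_nonneg (hQ0 x).le ρ))]
  rw [hlin, ENNReal.toReal_ofReal]
  exact Finset.sum_nonneg fun x _ => div_nonneg (hP0 x) (Real.rpow_nonneg (hQ0 x).le ρ)
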